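/- Let c₁ ∈ (0,1), let v ∈ ℝ with v ≠ 0, and let r_t, r_r > 0 satisfy r_t + r_r ≤ 1 − c₁ and √r_t + √r_r ≥ 1. Let L ∈ ℂ with Re L = 1/(2|v|). Set RE := |v|·(r_t − r_r − 1), IM := √(4v²r_r − RE²), FT := RE + i·IM, and TH := 1 + FT·L. Then |TH| ≥ c₁/4. -/

import Mathlib

open Complex

private lemma aux_key (rt rr : ℝ) (hrt : 0 ≤ rt) (hrr : 0 ≤ rr) (hrr1 : rr ≤ 1)
    (hs : 1 ≤ Real.sqrt rt + Real.sqrt rr) : 1 + rr - rt ≤ 2 * Real.sqrt rr := by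
  have hxs : Real.sqrt rt ^ 2 = rt := Real.sq_sqrt hrt
  have hys : Real.sqrt rr ^ 2 = rr := Real.sq_sqrt hrr
  have hy1 : Real.sqrt rr ≤ 1 := Real.sqrt_le_one.mpr hrr1
  nlinarith [Real.sqrt_nonneg rt, Real.sqrt_nonneg rr,
    mul_self_le_mul_self (by linarith : (0:ℝ) ≤ 1 - Real.sqrt rr)
      (by linarith : 1 - Real.sqrt rr ≤ Real.sqrt rt)]

private lemma aux_sq_le (rr d : ℝ) (hd : 0 ≤ d) (hrr : 0 ≤ rr)
    (h : d ≤ 2 * Real.sqrt rr) : d ^ 2 ≤ 4 * rr := by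
  have hys : Real.sqrt rr ^ 2 = rr := Real.sq_sqrt hrr
  nlinarith [Real.sqrt_nonneg rr]

private lemma aux_sq_mono (v c t : ℝ) (hc : 0 ≤ c) (h : c ≤ t) :
    v ^ 2 * c ^ 2 ≤ v ^ 2 * t ^ 2 := by
  nlinarith [sq_nonneg v, mul_le_mul h h hc (le_trans hc h)]

/-- For `c₁ ∈ (0,1)`, `v ≠ 0`, target rates `r_t, r_r > 0` with `r_t + r_r ≤ 1 - c₁` and
`√r_t + √r_r ≥ 1`, and `L ∈ ℂ` with `Re L = 1/(2|v|)`: setting `RE = |v|(r_t - r_r - 1)`,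
`IM = √(4v²r_r - RE²)`, `FT = RE + i·IM` and `TH = 1 + FT·L`, one has `|TH| ≥ c₁/4`. -/
theorem TH_lower_bound (c₁ v : ℝ) (hc₁ : c₁ ∈ Set.Ioo (0 : ℝ) 1) (hv : v ≠ 0)
    (rt rr : ℝ) (hrt : 0 < rt) (hrr : 0 < rr)
    (hsum : rt + rr ≤ 1 - c₁) (hsqrt : 1 ≤ Real.sqrt rt + Real.sqrt rr)
    (L : ℂ) (hL : L.re = 1 / (2 * |v|))
    (RE IM : ℝ) (FT TH : ℂ)
    (hRE : RE = |v| * (rt - rr - 1))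
    (hIM : IM = Real.sqrt (4 * v ^ 2 * rr - RE ^ 2))
    (hFT : FT = (RE : ℂ) + Complex.I * (IM : ℂ))
    (hTH : TH = 1 + FT * L) :
    c₁ / 4 ≤ ‖TH‖ := by
  obtain ⟨hc0, hc1⟩ := hc₁
  have hA : (0 : ℝ) < |v| := abs_pos.mpr hv
  have hv2 : |v| ^ 2 = v ^ 2 := sq_abs v
  have hv2pos : (0 : ℝ) < v ^ 2 := by positivity
  set a := L.re with ha
  set b := L.im with hb
  have ha1 : 2 * |v| * a = 1 := by
    rw [hL]; field_simp
  have he4 : 4 * v ^ 2 * a ^ 2 = 1 := by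
    linear_combination (2 * |v| * a + 1) * ha1 - 4 * a ^ 2 * hv2
  have he1 : RE * a = (rt - rr - 1) / 2 := by
    rw [hRE]
    linear_combination ((rt - rr - 1) / 2) * ha1
  have he2 : RE ^ 2 = v ^ 2 * (rt - rr - 1) ^ 2 := by
    rw [hRE]; rw [mul_pow, hv2]
  have hrr1 : rr ≤ 1 := by linarith
  have hd : (0 : ℝ) ≤ 1 + rr - rt := by linarith
  have hkey : 1 + rr - rt ≤ 2 * Real.sqrt rr :=
    aux_key rt rr hrt.le hrr.le hrr1 hsqrt
  have h4 : (1 + rr - rt) ^ 2 ≤ 4 * rr := aux_sq_le rr _ hd hrr.le hkey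
  have hnonneg : 0 ≤ 4 * v ^ 2 * rr - RE ^ 2 := by
    rw [he2]
    have h5 : v ^ 2 * (1 + rr - rt) ^ 2 ≤ v ^ 2 * (4 * rr) :=
      mul_le_mul_of_nonneg_left h4 hv2pos.le
    have heq : (rt - rr - 1) ^ 2 = (1 + rr - rt) ^ 2 := by ring
    rw [heq]; linarith [h5]
  have he3 : IM ^ 2 = 4 * v ^ 2 * rr - RE ^ 2 := by
    rw [hIM]; exact Real.sq_sqrt hnonneg
  -- real and imaginary parts of TH
  have hre : TH.re = 1 + RE * a - IM * b := by
    rw [hTH, hFT]; simp [Complex.add_re, Complex.mul_re, Complex.mul_im]; ring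
  have him : TH.im = RE * b + IM * a := by
    rw [hTH, hFT]; simp [Complex.add_im, Complex.mul_re, Complex.mul_im]; rw [ha, hb]
  -- key identity
  have heq : 4 * v ^ 2 * rr * (TH.re ^ 2 + TH.im ^ 2)
      = (4 * v ^ 2 * rr * b - IM) ^ 2 + v ^ 2 * (1 - rt - rr) ^ 2 := by
    rw [hre, him]
    linear_combination (4 * v ^ 2 * rr * b ^ 2 + rr - 1) * he3 + rr * IM ^ 2 * he4 +
      4 * v ^ 2 * rr * (1 + RE * a + (1 + rt - rr) / 2) * he1 - (rr - 1) * he2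
  have hc : v ^ 2 * c₁ ^ 2 ≤ v ^ 2 * (1 - rt - rr) ^ 2 :=
    aux_sq_mono v c₁ (1 - rt - rr) hc0.le (by linarith)
  have hS : v ^ 2 * c₁ ^ 2 ≤ 4 * v ^ 2 * rr * (TH.re ^ 2 + TH.im ^ 2) := by
    rw [heq]
    linarith [sq_nonneg (4 * v ^ 2 * rr * b - IM), hc]
  have habs : ‖TH‖ ^ 2 = TH.re ^ 2 + TH.im ^ 2 := by
    rw [Complex.sq_norm, Complex.normSq_apply]; ring
  have hSnn : 0 ≤ TH.re ^ 2 + TH.im ^ 2 := by positivity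
  have h5 : c₁ ^ 2 ≤ 4 * rr * (TH.re ^ 2 + TH.im ^ 2) := by
    have h := hS
    rw [show 4 * v ^ 2 * rr * (TH.re ^ 2 + TH.im ^ 2)
        = v ^ 2 * (4 * rr * (TH.re ^ 2 + TH.im ^ 2)) by ring] at h
    exact (mul_le_mul_iff_right₀ hv2pos).mp h
  have h6 : 4 * rr * (TH.re ^ 2 + TH.im ^ 2) ≤ 4 * (TH.re ^ 2 + TH.im ^ 2) := by
    have := mul_le_mul_of_nonneg_right (by linarith : 4 * rr ≤ 4) hSnn
    linarith
  have hfin : (c₁ / 2) ^ 2 ≤ ‖TH‖ ^ 2 := by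
    rw [habs, div_pow]
    norm_num
    linarith
  have h7 : c₁ / 2 ≤ ‖TH‖ :=
    le_of_pow_le_pow_left₀ two_ne_zero (norm_nonneg TH) hfin
  linarith
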